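/- Let X be a reflexive Banach space and let (f_n) be a sequence of representative functions on X × X* such that each operator T_n := L(f_n) = {(x, x*) : f_n(x, x*) = ⟨x, x*⟩} is maximal monotone. If (f_n) epi-converges to f, then L(f) = liminf T_n, where liminf T_n is the set of all strong limits lim_n (x_n, x_n*) with (x_n, x_n*) ∈ T_n for all n. -/

import Mathlib

open Filter Topology
noncomputable section
variable {X : Type*} [NormedAddCommGroup X] [NormedSpace ℝ X]

def pairing (p : X × StrongDual ℝ X) : ℝ := p.2 p.1

def ConvexERealOn {E : Type*} [AddCommGroup E] [Module ℝ E] (f : E → EReal) : Prop :=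
  ∀ x y : E, ∀ a b : ℝ, 0 ≤ a → 0 ≤ b → a + b = 1 →
    f (a • x + b • y) ≤ (a : EReal) * f x + (b : EReal) * f y

def IsGamma {E : Type*} [AddCommGroup E] [Module ℝ E] [TopologicalSpace E] (f : E → EReal) : Prop :=
  LowerSemicontinuous f ∧ ConvexERealOn f ∧ ∀ x, f x ≠ ⊥

def EpiConverges {E : Type*} [TopologicalSpace E] (fs : ℕ → E → EReal) (f : E → EReal) : Prop :=
  ∀ z : E,
    (∃ zs : ℕ → E, Tendsto zs atTop (nhds z) ∧
      Tendsto (fun n => fs n (zs n)) atTop (nhds (f z))) ∧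
    (∀ zs : ℕ → E, Tendsto zs atTop (nhds z) →
      f z ≤ Filter.liminf (fun n => fs n (zs n)) atTop)

def conjFn (f : X × StrongDual ℝ X → EReal) (q : StrongDual ℝ X × X) : EReal :=
  ⨆ p : X × StrongDual ℝ X, (((q.1 p.1 + p.2 q.2 : ℝ) : EReal) - f p)

def Lset (f : X × StrongDual ℝ X → EReal) : Set (X × StrongDual ℝ X) :=
  {p | f p = (pairing p : EReal)}

def MonotoneSet (T : Set (X × StrongDual ℝ X)) : Prop :=
  ∀ p ∈ T, ∀ q ∈ T, 0 ≤ (q.2 - p.2) (q.1 - p.1)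

def MaximalMonotone (T : Set (X × StrongDual ℝ X)) : Prop :=
  MonotoneSet T ∧ ∀ S : Set (X × StrongDual ℝ X), MonotoneSet S → T ⊆ S → S = T

def OpLiminf (Ts : ℕ → Set (X × StrongDual ℝ X)) : Set (X × StrongDual ℝ X) :=
  {p | ∃ zs : ℕ → X × StrongDual ℝ X, (∀ n, zs n ∈ Ts n) ∧ Tendsto zs atTop (nhds p)}

def fitz (T : Set (X × StrongDual ℝ X)) (p : X × StrongDual ℝ X) : EReal :=
  ⨆ q ∈ T, (((p.2 - q.2) (q.1 - p.1) + p.2 p.1 : ℝ) : EReal)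

open Classical in
def indic (T : Set (X × StrongDual ℝ X)) (p : X × StrongDual ℝ X) : EReal :=
  if p ∈ T then 0 else ⊤

def IsRepFunOf (g : X × StrongDual ℝ X → EReal) (T : Set (X × StrongDual ℝ X)) : Prop :=
  IsGamma g ∧ (∀ p, (pairing p : EReal) ≤ g p) ∧ ∀ p, (g p = (pairing p : EReal) ↔ p ∈ T)

def IsReflexive (X : Type*) [NormedAddCommGroup X] [NormedSpace ℝ X] : Prop :=
  Function.Surjective (NormedSpace.inclusionInDoubleDual ℝ X)

def WeakTendstoProd (zs : ℕ → X × StrongDual ℝ X) (z : X × StrongDual ℝ X) : Prop :=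
  (∀ g : StrongDual ℝ X, Tendsto (fun n => g (zs n).1) atTop (nhds (g z.1))) ∧
  (∀ G : StrongDual ℝ (StrongDual ℝ X),
    Tendsto (fun n => G (zs n).2) atTop (nhds (G z.2)))

def MoscoConverges (fs : ℕ → X × StrongDual ℝ X → EReal)
    (f : X × StrongDual ℝ X → EReal) : Prop :=
  ∀ z : X × StrongDual ℝ X,
    (∃ zs : ℕ → X × StrongDual ℝ X, Tendsto zs atTop (nhds z) ∧
      Tendsto (fun n => fs n (zs n)) atTop (nhds (f z))) ∧
    (∀ zs : ℕ → X × StrongDual ℝ X, WeakTendstoProd zs z →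
      f z ≤ Filter.liminf (fun n => fs n (zs n)) atTop)

def Tset (h : X × StrongDual ℝ X → EReal) : Set (X × StrongDual ℝ X) :=
  {p | ((2 * pairing p : ℝ) : EReal) = h p + conjFn h (p.2, p.1)}

lemma MonotoneSet.singleton' (p : X × StrongDual ℝ X) : MonotoneSet {p} := by
  intro a ha b hb
  simp only [Set.mem_singleton_iff] at ha hb
  subst ha; subst hb; simp

lemma maximal_nonempty {T : Set (X × StrongDual ℝ X)} (h : MaximalMonotone T) :
    T.Nonempty := by
  by_contra hne
  rw [Set.not_nonempty_iff_eq_empty] at hne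
  have := h.2 {(0,0)} (MonotoneSet.singleton' _) (by rw [hne]; exact Set.empty_subset _)
  rw [hne] at this
  exact absurd (this ▸ Set.mem_singleton ((0:X),(0:StrongDual ℝ X))) (Set.notMem_empty _)

lemma convex_sq_half {a b s t c : ℝ} (ha : 0 ≤ a) (hb : 0 ≤ b) (hab : a + b = 1)
    (hs : 0 ≤ s) (ht : 0 ≤ t) (hc : 0 ≤ c) (hle : c ≤ a*s + b*t) :
    c^2/2 ≤ a*(s^2/2) + b*(t^2/2) := by
  nlinarith [sq_nonneg (s - t), mul_nonneg ha hb, mul_nonneg (mul_nonneg ha hb) (sq_nonneg (s-t))]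

lemma dual_norm_approx (f : StrongDual ℝ X) {δ : ℝ} (hδ : 0 < δ) :
    ∃ x : X, ‖x‖ ≤ 1 ∧ ‖f‖ - δ ≤ f x := by
  by_cases hsmall : ‖f‖ ≤ δ
  · exact ⟨0, by simp, by simp; linarith⟩
  push_neg at hsmall
  by_contra hcon
  push_neg at hcon
  have hb : ∀ x : X, ‖x‖ ≤ 1 → |f x| ≤ ‖f‖ - δ := by
    intro x hx
    rcases abs_cases (f x) with ⟨he, _⟩ | ⟨he, _⟩
    · rw [he]; linarith [(hcon x hx)]
    · rw [he]
      have := hcon (-x) (by simpa using hx)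
      simp at this; linarith
  have hle : ‖f‖ ≤ ‖f‖ - δ := by
    apply ContinuousLinearMap.opNorm_le_bound f (by linarith)
    intro x
    by_cases hx0 : x = 0
    · simp [hx0]
    have hxn : (0:ℝ) < ‖x‖ := norm_pos_iff.mpr hx0
    have h1 : ‖(‖x‖⁻¹ • x)‖ ≤ 1 := by
      rw [norm_smul, norm_inv, norm_norm, inv_mul_cancel₀ (ne_of_gt hxn)]
    have h2 := hb _ h1
    rw [map_smul, smul_eq_mul, abs_mul, abs_inv, abs_norm] at h2
    rw [Real.norm_eq_abs]
    calc |f x| = ‖x‖ * (‖x‖⁻¹ * |f x|) := by field_simp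
    _ ≤ ‖x‖ * (‖f‖ - δ) := mul_le_mul_of_nonneg_left h2 hxn.le
    _ = (‖f‖ - δ) * ‖x‖ := by ring
  linarith

lemma norming_functional (a : X) :
    ∃ fh : StrongDual ℝ X, ‖fh‖ ≤ 1 ∧ fh a = ‖a‖ := by
  by_cases ha : a = 0
  · exact ⟨0, by simp, by simp [ha]⟩
  obtain ⟨g, hg1, hg2⟩ := exists_dual_vector ℝ a (norm_ne_zero_iff.mpr ha)
  exact ⟨g, le_of_eq hg1, by exact_mod_cast hg2⟩

section LemA
variable [CompleteSpace X]

set_option maxHeartbeats 8000000 in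
lemma lemA (hrefl : IsReflexive X)
    (h : X × StrongDual ℝ X → EReal)
    (hconv : ConvexERealOn h) (hbot : ∀ p, h p ≠ ⊥)
    (hπ : ∀ p, (pairing p : EReal) ≤ h p)
    (hmax : MaximalMonotone (Lset h))
    (z₀ : X × StrongDual ℝ X) (ε : ℝ)
    (hz₀ : h z₀ ≤ ((pairing z₀ + ε : ℝ) : EReal)) :
    ∃ w ∈ Lset h, ‖w.1 - z₀.1‖ ≤ Real.sqrt (2*ε) ∧ ‖w.2 - z₀.2‖ ≤ Real.sqrt (2*ε) := by
  classical
  -- the auxiliary convex continuous function g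
  set g : X × StrongDual ℝ X → ℝ := fun y => ‖y.1 - z₀.1‖^2/2 + ‖y.2 - z₀.2‖^2/2
      - z₀.2 y.1 - y.2 z₀.1 + z₀.2 z₀.1 with hg_def
  -- pairing + g ≥ 0
  have gπ : ∀ z : X × StrongDual ℝ X, 0 ≤ pairing z + g z := by
    intro z
    have e1 : (z.2 - z₀.2) (z.1 - z₀.1)
        = pairing z - z₀.2 z.1 - z.2 z₀.1 + z₀.2 z₀.1 := by
      simp [pairing, map_sub, ContinuousLinearMap.sub_apply]
      ring
    have e2 : -(‖z.2 - z₀.2‖ * ‖z.1 - z₀.1‖) ≤ (z.2 - z₀.2) (z.1 - z₀.1) := by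
      have := (z.2 - z₀.2).le_opNorm (z.1 - z₀.1)
      have habs := abs_le.mp (abs_le.mpr ⟨neg_abs_le _, le_abs_self _⟩ :
        |(z.2 - z₀.2) (z.1 - z₀.1)| ≤ |(z.2 - z₀.2) (z.1 - z₀.1)|)
      have h2 : |(z.2 - z₀.2) (z.1 - z₀.1)| ≤ ‖z.2 - z₀.2‖ * ‖z.1 - z₀.1‖ := by
        simpa [Real.norm_eq_abs] using this
      linarith [neg_abs_le ((z.2 - z₀.2) (z.1 - z₀.1))]
    have e3 : pairing z + g z
        = (z.2 - z₀.2) (z.1 - z₀.1) + ‖z.1 - z₀.1‖^2/2 + ‖z.2 - z₀.2‖^2/2 := by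
      rw [e1, hg_def]; ring
    rw [e3]
    nlinarith [sq_nonneg (‖z.1 - z₀.1‖ - ‖z.2 - z₀.2‖)]
  -- convexity of g
  have gconv : ∀ (y₁ y₂ : X × StrongDual ℝ X) (a b : ℝ), 0 ≤ a → 0 ≤ b → a + b = 1 →
      g (a • y₁ + b • y₂) ≤ a * g y₁ + b * g y₂ := by
    intro y₁ y₂ a b ha hb hab
    have hz1 : a • z₀.1 + b • z₀.1 = z₀.1 := by rw [← add_smul, hab, one_smul]
    have hz2 : a • z₀.2 + b • z₀.2 = z₀.2 := by rw [← add_smul, hab, one_smul]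
    have e1 : (a • y₁ + b • y₂).1 - z₀.1 = a • (y₁.1 - z₀.1) + b • (y₂.1 - z₀.1) := by
      have e : a • (y₁.1 - z₀.1) + b • (y₂.1 - z₀.1)
          = a • y₁.1 + b • y₂.1 - (a • z₀.1 + b • z₀.1) := by
        rw [smul_sub, smul_sub]; abel
      rw [e, hz1]; rfl
    have e2 : (a • y₁ + b • y₂).2 - z₀.2 = a • (y₁.2 - z₀.2) + b • (y₂.2 - z₀.2) := by
      have e : a • (y₁.2 - z₀.2) + b • (y₂.2 - z₀.2)
          = a • y₁.2 + b • y₂.2 - (a • z₀.2 + b • z₀.2) := by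
        rw [smul_sub, smul_sub]; abel
      rw [e, hz2]; rfl
    have n1 : ‖(a • y₁ + b • y₂).1 - z₀.1‖ ≤ a * ‖y₁.1 - z₀.1‖ + b * ‖y₂.1 - z₀.1‖ := by
      rw [e1]
      refine (norm_add_le _ _).trans ?_
      rw [norm_smul, norm_smul, Real.norm_eq_abs, Real.norm_eq_abs,
        abs_of_nonneg ha, abs_of_nonneg hb]
    have n2 : ‖(a • y₁ + b • y₂).2 - z₀.2‖ ≤ a * ‖y₁.2 - z₀.2‖ + b * ‖y₂.2 - z₀.2‖ := by
      rw [e2]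
      refine (norm_add_le _ _).trans ?_
      rw [norm_smul, norm_smul, Real.norm_eq_abs, Real.norm_eq_abs,
        abs_of_nonneg ha, abs_of_nonneg hb]
    have sq1 := convex_sq_half ha hb hab (norm_nonneg (y₁.1 - z₀.1)) (norm_nonneg (y₂.1 - z₀.1))
      (norm_nonneg ((a • y₁ + b • y₂).1 - z₀.1)) n1
    have sq2 := convex_sq_half ha hb hab (norm_nonneg (y₁.2 - z₀.2)) (norm_nonneg (y₂.2 - z₀.2))
      (norm_nonneg ((a • y₁ + b • y₂).2 - z₀.2)) n2
    have l1 : z₀.2 ((a • y₁ + b • y₂).1) = a * z₀.2 y₁.1 + b * z₀.2 y₂.1 := by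
      have e : (a • y₁ + b • y₂).1 = a • y₁.1 + b • y₂.1 := rfl
      rw [e, map_add, map_smul, map_smul, smul_eq_mul, smul_eq_mul]
    have l2 : (a • y₁ + b • y₂).2 z₀.1 = a * y₁.2 z₀.1 + b * y₂.2 z₀.1 := by
      have e : (a • y₁ + b • y₂).2 = a • y₁.2 + b • y₂.2 := rfl
      rw [e, ContinuousLinearMap.add_apply, ContinuousLinearMap.smul_apply,
        ContinuousLinearMap.smul_apply, smul_eq_mul, smul_eq_mul]
    have hC : a * (z₀.2 z₀.1) + b * (z₀.2 z₀.1) = z₀.2 z₀.1 := by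
      rw [← add_mul, hab, one_mul]
    simp only [hg_def]
    rw [l1, l2]
    set A1 := z₀.2 y₁.1
    set A2 := z₀.2 y₂.1
    set B1 := y₁.2 z₀.1
    set B2 := y₂.2 z₀.1
    set C := z₀.2 z₀.1
    set N1 := ‖(a • y₁ + b • y₂).1 - z₀.1‖
    set N2 := ‖(a • y₁ + b • y₂).2 - z₀.2‖
    set M1 := ‖y₁.1 - z₀.1‖
    set M2 := ‖y₂.1 - z₀.1‖
    set K1 := ‖y₁.2 - z₀.2‖
    set K2 := ‖y₂.2 - z₀.2‖
    have expand : a * (M1^2/2 + K1^2/2 - A1 - B1 + C) + b * (M2^2/2 + K2^2/2 - A2 - B2 + C)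
        = a*(M1^2/2) + b*(M2^2/2) + (a*(K1^2/2) + b*(K2^2/2))
          - (a*A1 + b*A2) - (a*B1 + b*B2) + (a*C + b*C) := by ring
    rw [expand, hC]
    linarith [sq1, sq2]
  -- continuity of g
  have gcont : Continuous g := by
    have c4 : Continuous fun y : X × StrongDual ℝ X => y.2 z₀.1 := by
      have hb := (isBoundedBilinearMap_apply (𝕜 := ℝ) (E := X) (F := ℝ)).continuous
      exact hb.comp (Continuous.prodMk continuous_snd continuous_const)
    have c3 : Continuous fun y : X × StrongDual ℝ X => z₀.2 y.1 := z₀.2.continuous.comp continuous_fst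
    have c1 : Continuous fun y : X × StrongDual ℝ X => ‖y.1 - z₀.1‖^2/2 := by fun_prop
    have c2 : Continuous fun y : X × StrongDual ℝ X => ‖y.2 - z₀.2‖^2/2 := by fun_prop
    rw [hg_def]
    exact ((((c1.add c2).sub c3).sub c4).add continuous_const)
  -- a point of T
  obtain ⟨zT, hzT⟩ := maximal_nonempty hmax
  have hzTv : h zT = ((pairing zT : ℝ) : EReal) := hzT
  -- ball bound for g around zT
  obtain ⟨r, hr0, hball⟩ : ∃ r > 0, ∀ u : X × StrongDual ℝ X,
      ‖u‖ < r → g (zT + u) ≤ g zT + 1 := by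
    have hcont0 : ContinuousAt (fun u : X × StrongDual ℝ X => g (zT + u)) 0 :=
      (gcont.comp (continuous_const.add continuous_id)).continuousAt
    obtain ⟨δ, hδ0, hδ⟩ := Metric.continuousAt_iff.mp hcont0 1 one_pos
    refine ⟨δ, hδ0, fun u hu => ?_⟩
    have h1 := hδ (x := u) (by simpa [dist_zero_right] using hu)
    simp only [add_zero] at h1
    rw [Real.dist_eq] at h1
    have h2 := le_abs_self (g (zT + u) - g zT)
    linarith
  set M : ℝ := pairing zT + g zT + 1 with hM_def
  -- the strict epigraph set
  set C : Set ((X × StrongDual ℝ X) × ℝ) :=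
    {w | ∃ z : X × StrongDual ℝ X,
      h z + ((g (z + w.1) : ℝ) : EReal) < ((w.2 : ℝ) : EReal)} with hC_def
  have hsub : ∀ (u : X × StrongDual ℝ X) (t : ℝ), ‖u‖ < r → M < t → (u, t) ∈ C := by
    intro u t hu ht
    refine ⟨zT, ?_⟩
    rw [hzTv, ← EReal.coe_add]
    have hle : pairing zT + g (zT + u) ≤ M := by
      have := hball u hu
      rw [hM_def]; linarith
    calc ((pairing zT + g (zT + u) : ℝ) : EReal) ≤ ((M : ℝ) : EReal) := by
          exact_mod_cast hle
    _ < ((t : ℝ) : EReal) := by exact_mod_cast ht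
  -- convexity of C
  have Ccvx : Convex ℝ C := by
    intro w₁ hw₁ w₂ hw₂ a b ha hb hab
    rcases eq_or_lt_of_le ha with ha0 | ha0
    · have hb1 : b = 1 := by linarith
      rw [← ha0, hb1]; simpa using hw₂
    rcases eq_or_lt_of_le hb with hb0 | hb0
    · have ha1 : a = 1 := by linarith
      rw [← hb0, ha1]; simpa using hw₁
    obtain ⟨z₁, hz₁⟩ := hw₁
    obtain ⟨z₂, hz₂⟩ := hw₂
    have htop₁ : h z₁ ≠ ⊤ := by
      intro htop
      rw [htop, EReal.top_add_coe] at hz₁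
      exact not_top_lt hz₁
    have htop₂ : h z₂ ≠ ⊤ := by
      intro htop
      rw [htop, EReal.top_add_coe] at hz₂
      exact not_top_lt hz₂
    have hr₁ : h z₁ = (((h z₁).toReal : ℝ) : EReal) := (EReal.coe_toReal htop₁ (hbot z₁)).symm
    have hr₂ : h z₂ = (((h z₂).toReal : ℝ) : EReal) := (EReal.coe_toReal htop₂ (hbot z₂)).symm
    set r₁ := (h z₁).toReal
    set r₂ := (h z₂).toReal
    have hz₁' : r₁ + g (z₁ + w₁.1) < w₁.2 := by
      rw [hr₁, ← EReal.coe_add] at hz₁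
      exact_mod_cast hz₁
    have hz₂' : r₂ + g (z₂ + w₂.1) < w₂.2 := by
      rw [hr₂, ← EReal.coe_add] at hz₂
      exact_mod_cast hz₂
    refine ⟨a • z₁ + b • z₂, ?_⟩
    have hcomb := hconv z₁ z₂ a b ha hb hab
    rw [hr₁, hr₂] at hcomb
    have hcomb' : h (a • z₁ + b • z₂) ≤ ((a * r₁ + b * r₂ : ℝ) : EReal) := by
      exact_mod_cast hcomb
    have halg : a • z₁ + b • z₂ + (a • w₁ + b • w₂).1
        = a • (z₁ + w₁.1) + b • (z₂ + w₂.1) := by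
      have e : (a • w₁ + b • w₂).1 = a • w₁.1 + b • w₂.1 := rfl
      rw [e, smul_add, smul_add]; abel
    have hgc : g (a • z₁ + b • z₂ + (a • w₁ + b • w₂).1)
        ≤ a * g (z₁ + w₁.1) + b * g (z₂ + w₂.1) := by
      rw [halg]; exact gconv _ _ a b ha hb hab
    have hsnd : (a • w₁ + b • w₂).2 = a * w₁.2 + b * w₂.2 := rfl
    have hfinal : a * r₁ + b * r₂ + g (a • z₁ + b • z₂ + (a • w₁ + b • w₂).1)
        < (a • w₁ + b • w₂).2 := by
      rw [hsnd]
      nlinarith [mul_lt_mul_of_pos_left hz₁' ha0, mul_lt_mul_of_pos_left hz₂' hb0]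
    calc h (a • z₁ + b • z₂) + ((g (a • z₁ + b • z₂ + (a • w₁ + b • w₂).1) : ℝ) : EReal)
        ≤ ((a * r₁ + b * r₂ : ℝ) : EReal) + ((g (a • z₁ + b • z₂ + (a • w₁ + b • w₂).1) : ℝ) : EReal) := by
          exact add_le_add hcomb' le_rfl
    _ = ((a * r₁ + b * r₂ + g (a • z₁ + b • z₂ + (a • w₁ + b • w₂).1) : ℝ) : EReal) := by
          norm_cast
    _ < (((a • w₁ + b • w₂).2 : ℝ) : EReal) := by exact_mod_cast hfinal
  -- (0,0) is not in C
  have hC0 : ((0 : X × StrongDual ℝ X), (0:ℝ)) ∉ C := by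
    rintro ⟨z, hz⟩
    rw [show ((0 : X × StrongDual ℝ X), (0:ℝ)).1 = 0 from rfl, add_zero] at hz
    have h1 : ((pairing z + g z : ℝ) : EReal) ≤ h z + ((g z : ℝ):EReal) := by
      rw [EReal.coe_add]; exact add_le_add (hπ z) le_rfl
    have h2 : ((pairing z + g z : ℝ) : EReal) < ((0:ℝ) : EReal) := lt_of_le_of_lt h1 hz
    rw [EReal.coe_lt_coe_iff] at h2
    linarith [gπ z]
  have hC0' : ((0 : X × StrongDual ℝ X), (0:ℝ)) ∉ interior C :=
    fun hx => hC0 (interior_subset hx)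
  obtain ⟨F, hF⟩ := geometric_hahn_banach_open_point (Ccvx.interior) isOpen_interior hC0'
  rw [show ((0 : X × StrongDual ℝ X), (0:ℝ)) = 0 from rfl, map_zero] at hF
  -- an open slab inside C
  set O : Set ((X × StrongDual ℝ X) × ℝ) := (Metric.ball (0 : X × StrongDual ℝ X) r) ×ˢ (Set.Ioi M) with hO_def
  have hOC : O ⊆ C := by
    rintro ⟨u, t⟩ ⟨hu, ht⟩
    exact hsub u t (by simpa [mem_ball_zero_iff] using hu) ht
  have hOint : O ⊆ interior C :=
    interior_maximal hOC (Metric.isOpen_ball.prod isOpen_Ioi)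
  set y₀ : (X × StrongDual ℝ X) × ℝ := ((0 : X × StrongDual ℝ X), max M 0 + 1) with hy₀_def
  have hy₀O : y₀ ∈ O := by
    constructor
    · simpa [mem_ball_zero_iff, hy₀_def] using hr0
    · exact lt_of_le_of_lt (le_max_left M 0) (lt_add_one _)
  -- F ≤ 0 on all of C
  have hFC : ∀ w ∈ C, F w ≤ 0 := by
    intro w hw
    by_contra hpos
    push_neg at hpos
    set K := F y₀ with hK_def
    have key : ∀ θ : ℝ, 0 < θ → θ ≤ 1 → θ * K + (1-θ) * F w < 0 := by
      intro θ hθ0 hθ1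
      have hmem := Ccvx.combo_interior_self_mem_interior (a := θ) (b := 1-θ)
        (hOint hy₀O) hw hθ0 (by linarith) (by ring)
      have hlt := hF _ hmem
      rw [map_add, map_smul, map_smul, smul_eq_mul, smul_eq_mul] at hlt
      linarith
    have hd : 0 < |K| + F w := add_pos_of_nonneg_of_pos (abs_nonneg K) hpos
    set θ := F w / (|K| + F w) with hθ_def
    have hθ0 : 0 < θ := div_pos hpos hd
    have hθ1 : θ ≤ 1 := by rw [hθ_def, div_le_one hd]; linarith [abs_nonneg K]
    have hkey := key θ hθ0 hθ1
    have h1 : θ * (|K| + F w) = F w := by rw [hθ_def]; field_simp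
    have h2 : θ * (-|K|) ≤ θ * K := mul_le_mul_of_nonneg_left (neg_abs_le K) hθ0.le
    nlinarith
  -- decompose F
  set G : (X × StrongDual ℝ X) →L[ℝ] ℝ :=
    F.comp (ContinuousLinearMap.inl ℝ (X × StrongDual ℝ X) ℝ) with hG_def
  set c : ℝ := F ((0 : X × StrongDual ℝ X), (1:ℝ)) with hc_def
  have hdec : ∀ (u : X × StrongDual ℝ X) (t : ℝ), F (u, t) = G u + t * c := by
    intro u t
    have e : ((u,t) : (X × StrongDual ℝ X) × ℝ)
        = ((u,0) : (X × StrongDual ℝ X) × ℝ)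
          + (t • (((0 : X × StrongDual ℝ X), (1:ℝ)) : (X × StrongDual ℝ X) × ℝ)) := by
      simp [Prod.ext_iff]
    rw [e, map_add, map_smul, smul_eq_mul]
    rfl
  have hcneg : c < 0 := by
    have hlt := hF y₀ (hOint hy₀O)
    have e : F y₀ = G 0 + (max M 0 + 1) * c := hdec 0 (max M 0 + 1)
    rw [e, map_zero, zero_add] at hlt
    have hpos : 0 < max M 0 + 1 := by
      have := le_max_right M 0; linarith
    by_contra hc
    push_neg at hc
    nlinarith
  have hcpos : 0 < -c := neg_pos.mpr hcneg
  set wstar : (X × StrongDual ℝ X) →L[ℝ] ℝ := (-c)⁻¹ • G with hwstar_def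
  have hws_apply : ∀ u, wstar u = (-c)⁻¹ * G u := fun u => rfl
  have hmaster0 : ∀ (u : X × StrongDual ℝ X) (t : ℝ), (u,t) ∈ C → wstar u ≤ t := by
    intro u t hm
    have hle := hFC _ hm
    rw [hdec] at hle
    rw [hws_apply, inv_mul_le_iff₀ hcpos]
    nlinarith
  have hmaster : ∀ z y : X × StrongDual ℝ X,
      ((wstar (y - z) : ℝ) : EReal) ≤ h z + ((g y : ℝ) : EReal) := by
    intro z y
    by_cases htop : h z = ⊤
    · rw [htop, EReal.top_add_coe]; exact le_top
    obtain ⟨rz, hrz⟩ : ∃ rz : ℝ, h z = ((rz:ℝ):EReal) :=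
      ⟨(h z).toReal, (EReal.coe_toReal htop (hbot z)).symm⟩
    rw [hrz, ← EReal.coe_add, EReal.coe_le_coe_iff]
    apply le_of_forall_pos_le_add
    intro δ hδ
    have hmem : (y - z, rz + g y + δ) ∈ C := by
      show ∃ z' : X × StrongDual ℝ X,
        h z' + ((g (z' + (y - z)) : ℝ) : EReal) < ((rz + g y + δ : ℝ) : EReal)
      refine ⟨z, ?_⟩
      have e : z + (y - z) = y := by abel
      rw [e, hrz, ← EReal.coe_add, EReal.coe_lt_coe_iff]
      linarith
    linarith [hmaster0 (y - z) (rz + g y + δ) hmem]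
  clear_value G wstar
  -- decompose wstar using reflexivity
  set vstar : StrongDual ℝ X :=
    wstar.comp (ContinuousLinearMap.inl ℝ X (StrongDual ℝ X)) with hvstar_def
  obtain ⟨v, hv⟩ := hrefl (wstar.comp (ContinuousLinearMap.inr ℝ X (StrongDual ℝ X)))
  have hvapp : ∀ φ : StrongDual ℝ X, φ v = wstar (0, φ) := by
    intro φ
    have h1 := congrArg (fun T : StrongDual ℝ (StrongDual ℝ X) => T φ) hv
    simp only [NormedSpace.dual_def] at h1
    rw [h1]
    simp [ContinuousLinearMap.inr_apply]
  have hwdec : ∀ u : X × StrongDual ℝ X, wstar u = vstar u.1 + u.2 v := by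
    intro u
    rw [hvapp u.2]
    have e : u = ((u.1, 0) : X × StrongDual ℝ X) + (0, u.2) := by simp
    calc wstar u = wstar ((u.1, (0 : StrongDual ℝ X)) + ((0:X), u.2)) := by rw [← e]
    _ = wstar (u.1, (0 : StrongDual ℝ X)) + wstar ((0:X), u.2) := map_add _ _ _
    _ = vstar u.1 + wstar ((0:X), u.2) := by
        rw [hvstar_def]
        simp [ContinuousLinearMap.comp_apply, ContinuousLinearMap.inl_apply]
  clear_value vstar
  set abar : X := z₀.1 + v with habar_def
  set abstar : StrongDual ℝ X := z₀.2 + vstar with habstar_def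
  set Dv : ℝ := vstar z₀.1 + z₀.2 v + z₀.2 z₀.1 + ‖abar‖^2/2 + ‖abstar‖^2/2 with hDv_def
  -- value computations
  have gval : ∀ (u : X) (us : StrongDual ℝ X), g (z₀.1 + u, z₀.2 + us)
      = ‖u‖^2/2 + ‖us‖^2/2 - z₀.2 u - us z₀.1 - z₀.2 z₀.1 := by
    intro u us
    simp only [hg_def]
    have e1 : (z₀.1 + u, z₀.2 + us).1 - z₀.1 = u := by
      show z₀.1 + u - z₀.1 = u; abel
    have e2 : (z₀.1 + u, z₀.2 + us).2 - z₀.2 = us := by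
      show z₀.2 + us - z₀.2 = us; abel
    rw [e1, e2]
    have e3 : z₀.2 ((z₀.1 + u, z₀.2 + us).1) = z₀.2 z₀.1 + z₀.2 u := by
      show z₀.2 (z₀.1 + u) = _; rw [map_add]
    have e4 : (z₀.1 + u, z₀.2 + us).2 z₀.1 = z₀.2 z₀.1 + us z₀.1 := by
      show (z₀.2 + us) z₀.1 = _; rw [ContinuousLinearMap.add_apply]
    rw [e3, e4]
    ring
  have wval : ∀ (u : X) (us : StrongDual ℝ X), wstar (z₀.1 + u, z₀.2 + us)
      = vstar z₀.1 + vstar u + z₀.2 v + us v := by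
    intro u us
    rw [hwdec]
    have e1 : vstar ((z₀.1 + u, z₀.2 + us).1) = vstar z₀.1 + vstar u := by
      show vstar (z₀.1 + u) = _; rw [map_add]
    have e2 : (z₀.1 + u, z₀.2 + us).2 v = z₀.2 v + us v := by
      show (z₀.2 + us) v = _; rw [ContinuousLinearMap.add_apply]
    rw [e1, e2]
    ring
  -- the approximate supremum estimate
  have hsupy : ∀ δ : ℝ, 0 < δ → ∃ y : X × StrongDual ℝ X, Dv - δ ≤ wstar y - g y := by
    intro δ hδ
    have hd1 : (0:ℝ) < ‖abstar‖ + 1 := by positivity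
    set δ' : ℝ := δ / (‖abstar‖ + 1) with hδ'_def
    have hδ'0 : 0 < δ' := div_pos hδ hd1
    have heq : δ' * (‖abstar‖ + 1) = δ := by
      rw [hδ'_def]; field_simp
    obtain ⟨xh, hxh1, hxh2⟩ := dual_norm_approx abstar hδ'0
    obtain ⟨fh, hfh1, hfh2⟩ := norming_functional abar
    refine ⟨(z₀.1 + ‖abstar‖ • xh, z₀.2 + ‖abar‖ • fh), ?_⟩
    rw [wval, gval]
    -- smul expansions
    have ev : vstar (‖abstar‖ • xh) = ‖abstar‖ * vstar xh := by
      rw [map_smul, smul_eq_mul]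
    have ez : z₀.2 (‖abstar‖ • xh) = ‖abstar‖ * z₀.2 xh := by
      rw [map_smul, smul_eq_mul]
    have eu1 : (‖abar‖ • fh) v = ‖abar‖ * fh v := by
      rw [ContinuousLinearMap.smul_apply, smul_eq_mul]
    have eu2 : (‖abar‖ • fh) z₀.1 = ‖abar‖ * fh z₀.1 := by
      rw [ContinuousLinearMap.smul_apply, smul_eq_mul]
    rw [ev, ez, eu1, eu2]
    -- norm bounds
    have nu : ‖(‖abstar‖ • xh : X)‖ ≤ ‖abstar‖ := by
      rw [norm_smul, norm_norm]
      calc ‖abstar‖ * ‖xh‖ ≤ ‖abstar‖ * 1 := mul_le_mul_of_nonneg_left hxh1 (norm_nonneg _)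
      _ = ‖abstar‖ := mul_one _
    have nus : ‖(‖abar‖ • fh : StrongDual ℝ X)‖ ≤ ‖abar‖ := by
      rw [norm_smul, norm_norm]
      calc ‖abar‖ * ‖fh‖ ≤ ‖abar‖ * 1 := mul_le_mul_of_nonneg_left hfh1 (norm_nonneg _)
      _ = ‖abar‖ := mul_one _
    have nu2 : ‖(‖abstar‖ • xh : X)‖^2 ≤ ‖abstar‖^2 :=
      pow_le_pow_left₀ (norm_nonneg _) nu 2
    have nus2 : ‖(‖abar‖ • fh : StrongDual ℝ X)‖^2 ≤ ‖abar‖^2 :=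
      pow_le_pow_left₀ (norm_nonneg _) nus 2
    -- key pairing estimates
    have habs_app : abstar xh = z₀.2 xh + vstar xh := ContinuousLinearMap.add_apply _ _ _
    have hA : ‖abstar‖ * (‖abstar‖ - δ') ≤ ‖abstar‖ * (z₀.2 xh + vstar xh) := by
      rw [← habs_app]
      exact mul_le_mul_of_nonneg_left hxh2 (norm_nonneg _)
    have hfa : fh z₀.1 + fh v = ‖abar‖ := by
      rw [← map_add, ← habar_def]; exact hfh2
    have hδ'b : ‖abstar‖ * δ' ≤ δ := by
      have hns : (0:ℝ) ≤ ‖abstar‖ := norm_nonneg _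
      linarith [heq, hδ'0.le]
    have hfa' : ‖abar‖ * (fh z₀.1 + fh v) = ‖abar‖ * ‖abar‖ := by rw [hfa]
    rw [hDv_def]
    linarith [hA, hfa', hδ'b, nu2, nus2]
  -- the key lower bound (**)
  have hstar : ∀ z : X × StrongDual ℝ X,
      ((Dv - wstar z : ℝ) : EReal) ≤ h z := by
    intro z
    by_cases htop : h z = ⊤
    · rw [htop]; exact le_top
    obtain ⟨rz, hrz⟩ : ∃ rz : ℝ, h z = ((rz:ℝ):EReal) :=
      ⟨(h z).toReal, (EReal.coe_toReal htop (hbot z)).symm⟩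
    rw [hrz, EReal.coe_le_coe_iff]
    have hall : ∀ δ : ℝ, 0 < δ → Dv - wstar z ≤ rz + δ := by
      intro δ hδ
      obtain ⟨y, hy⟩ := hsupy δ hδ
      have hm := hmaster z y
      rw [hrz, ← EReal.coe_add, EReal.coe_le_coe_iff, map_sub] at hm
      linarith
    linarith [le_of_forall_pos_le_add hall]
  clear_value g M C O y₀ c Dv abar abstar
  -- the candidate point
  set p₀ : X × StrongDual ℝ X := (-v, -vstar) with hp₀_def
  have hkey : ∀ q ∈ Lset h, Dv ≤ wstar q + pairing q := by
    intro q hq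
    have hq' : h q = ((pairing q : ℝ) : EReal) := hq
    have hs := hstar q
    rw [hq', EReal.coe_le_coe_iff] at hs
    linarith
  have hprod : ∀ q : X × StrongDual ℝ X,
      (q.2 - p₀.2) (q.1 - p₀.1) = vstar v + wstar q + pairing q := by
    intro q
    have e2 : q.2 - p₀.2 = q.2 + vstar := by
      rw [hp₀_def]; show q.2 - (-vstar) = _; rw [sub_neg_eq_add]
    have e1 : q.1 - p₀.1 = q.1 + v := by
      rw [hp₀_def]; show q.1 - (-v) = _; rw [sub_neg_eq_add]
    rw [e1, e2, ContinuousLinearMap.add_apply, map_add, map_add, hwdec q]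
    show q.2 q.1 + q.2 v + (vstar q.1 + vstar v) = vstar v + (vstar q.1 + q.2 v) + pairing q
    show q.2 q.1 + q.2 v + (vstar q.1 + vstar v) = vstar v + (vstar q.1 + q.2 v) + q.2 q.1
    ring
  have hquad : 0 ≤ vstar v + Dv := by
    have e : abstar abar = z₀.2 z₀.1 + z₀.2 v + vstar z₀.1 + vstar v := by
      rw [habstar_def, habar_def, ContinuousLinearMap.add_apply, map_add, map_add]
      ring
    have hb : -(‖abstar‖ * ‖abar‖) ≤ abstar abar := by
      have h1 := abstar.le_opNorm abar
      rw [Real.norm_eq_abs] at h1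
      linarith [neg_abs_le (abstar abar)]
    rw [hDv_def]
    linarith [sq_nonneg (‖abar‖ - ‖abstar‖), hb, e]
  have hmono : MonotoneSet (insert p₀ (Lset h)) := by
    intro p hp q hq
    rcases Set.mem_insert_iff.mp hp with hp' | hp' <;>
      rcases Set.mem_insert_iff.mp hq with hq' | hq'
    · subst hp'; subst hq'; simp
    · subst hp'
      rw [hprod q]
      linarith [hkey q hq', hquad]
    · subst hq'
      have eflip : (p₀.2 - p.2) (p₀.1 - p.1) = (p.2 - p₀.2) (p.1 - p₀.1) := by
        have e1 : p₀.2 - p.2 = -(p.2 - p₀.2) := by abel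
        have e2 : p₀.1 - p.1 = -(p.1 - p₀.1) := by abel
        rw [e1, e2, ContinuousLinearMap.neg_apply, map_neg, neg_neg]
      rw [eflip, hprod p]
      linarith [hkey p hp', hquad]
    · exact hmax.1 p hp' q hq'
  have hSeq := hmax.2 (insert p₀ (Lset h)) hmono (Set.subset_insert _ _)
  have hp₀T : p₀ ∈ Lset h := by rw [← hSeq]; exact Set.mem_insert _ _
  -- quantitative bounds
  have hb2 : ‖abar‖^2/2 + ‖abstar‖^2/2 ≤ ε := by
    have hs := le_trans (hstar z₀) hz₀
    rw [EReal.coe_le_coe_iff] at hs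
    have hw0 : wstar z₀ = vstar z₀.1 + z₀.2 v := hwdec z₀
    have hpz : pairing z₀ = z₀.2 z₀.1 := rfl
    rw [hDv_def] at hs
    linarith [hs, hw0, hpz]
  have hεnn : 0 ≤ ε := by
    have := sq_nonneg ‖abar‖
    have := sq_nonneg ‖abstar‖
    linarith
  have hn1 : ‖p₀.1 - z₀.1‖ = ‖abar‖ := by
    have e : p₀.1 - z₀.1 = -(abar) := by
      rw [hp₀_def, habar_def]
      show -v - z₀.1 = -(z₀.1 + v); abel
    rw [e, norm_neg]
  have hn2 : ‖p₀.2 - z₀.2‖ = ‖abstar‖ := by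
    have e : p₀.2 - z₀.2 = -(abstar) := by
      rw [hp₀_def, habstar_def]
      show -vstar - z₀.2 = -(z₀.2 + vstar); abel
    rw [e, norm_neg]
  refine ⟨p₀, hp₀T, ?_, ?_⟩
  · rw [hn1]
    refine (Real.le_sqrt (norm_nonneg _) (by linarith)).mpr ?_
    nlinarith [sq_nonneg ‖abstar‖]
  · rw [hn2]
    refine (Real.le_sqrt (norm_nonneg _) (by linarith)).mpr ?_
    nlinarith [sq_nonneg ‖abar‖]

end LemA

/-- If representative functions of maximal monotone operators `T_n = L(f_n)`
epi-converge to `f`, then `L(f) = liminf T_n`. -/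
theorem stmt2 [CompleteSpace X] (hrefl : IsReflexive X)
    (fs : ℕ → X × StrongDual ℝ X → EReal)
    (hfs_gamma : ∀ n, IsGamma (fs n))
    (hfs_rep : ∀ n p, (pairing p : EReal) ≤ fs n p)
    (hmax : ∀ n, MaximalMonotone (Lset (fs n)))
    (f : X × StrongDual ℝ X → EReal)
    (hepi : EpiConverges fs f) :
    Lset f = OpLiminf (fun n => Lset (fs n)) := by
  have hpair_cont : Continuous (pairing : X × StrongDual ℝ X → ℝ) := by
    have h := (isBoundedBilinearMap_apply (𝕜 := ℝ) (E := X) (F := ℝ)).continuous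
    exact h.comp continuous_swap
  ext p
  constructor
  · -- Lset f ⊆ OpLiminf
    intro hp
    have hpv : f p = ((pairing p : ℝ) : EReal) := hp
    obtain ⟨zs, hzs, hlim⟩ := (hepi p).1
    rw [hpv] at hlim
    have hne_top : ∀ᶠ n in atTop, fs n (zs n) ≠ ⊤ :=
      hlim.eventually_ne (EReal.coe_ne_top _)
    set εn : ℕ → ℝ := fun n => (fs n (zs n)).toReal - pairing (zs n) with hεn_def
    have hεlim : Tendsto εn atTop (𝓝 0) := by
      have h1 : Tendsto (fun n => (fs n (zs n)).toReal) atTop (𝓝 (pairing p)) := by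
        have := (EReal.tendsto_toReal (EReal.coe_ne_top (pairing p))
          (EReal.coe_ne_bot (pairing p))).comp hlim
        exact this
      have h2 : Tendsto (fun n => pairing (zs n)) atTop (𝓝 (pairing p)) :=
        (hpair_cont.tendsto p).comp hzs
      simpa [hεn_def] using h1.sub h2
    have hchoice : ∀ n, ∃ w, w ∈ Lset (fs n) ∧ (fs n (zs n) ≠ ⊤ →
        ‖w.1 - (zs n).1‖ ≤ Real.sqrt (2 * εn n) ∧ ‖w.2 - (zs n).2‖ ≤ Real.sqrt (2 * εn n)) := by
      intro n
      by_cases htop : fs n (zs n) = ⊤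
      · obtain ⟨w, hw⟩ := maximal_nonempty (hmax n)
        exact ⟨w, hw, fun hc => absurd htop hc⟩
      · have e2 : pairing (zs n) + εn n = (fs n (zs n)).toReal := by
          simp only [hεn_def]; ring
        have e : ((pairing (zs n) + εn n : ℝ) : EReal) = fs n (zs n) := by
          rw [e2]; exact EReal.coe_toReal htop ((hfs_gamma n).2.2 (zs n))
        obtain ⟨w, hw, h1, h2⟩ := lemA hrefl (fs n) (hfs_gamma n).2.1 (hfs_gamma n).2.2
          (hfs_rep n) (hmax n) (zs n) (εn n) (le_of_eq e.symm)
        exact ⟨w, hw, fun _ => ⟨h1, h2⟩⟩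
    choose ws hws hbnd using hchoice
    refine ⟨ws, hws, ?_⟩
    have hsq : Tendsto (fun n => Real.sqrt (2 * εn n)) atTop (𝓝 0) := by
      have h2 : Tendsto (fun n => 2 * εn n) atTop (𝓝 0) := by
        simpa using hεlim.const_mul 2
      have h3 : Tendsto (fun n => Real.sqrt (2 * εn n)) atTop (𝓝 (Real.sqrt 0)) :=
        (Real.continuous_sqrt.tendsto 0).comp h2
      rw [Real.sqrt_zero] at h3
      exact h3
    have hzs1 : Tendsto (fun n => (zs n).1) atTop (𝓝 p.1) := (continuous_fst.tendsto p).comp hzs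
    have hzs2 : Tendsto (fun n => (zs n).2) atTop (𝓝 p.2) := (continuous_snd.tendsto p).comp hzs
    have hn1 : Tendsto (fun n => (ws n).1) atTop (𝓝 p.1) := by
      rw [tendsto_iff_norm_sub_tendsto_zero]
      apply squeeze_zero' (Eventually.of_forall fun n => norm_nonneg _)
      · filter_upwards [hne_top] with n hn
        calc ‖(ws n).1 - p.1‖ ≤ ‖(ws n).1 - (zs n).1‖ + ‖(zs n).1 - p.1‖ := by
              have e : (ws n).1 - p.1 = ((ws n).1 - (zs n).1) + ((zs n).1 - p.1) := by abel
              rw [e]; exact norm_add_le _ _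
        _ ≤ Real.sqrt (2 * εn n) + ‖(zs n).1 - p.1‖ := by
              linarith [(hbnd n hn).1]
      · have := hsq.add (tendsto_iff_norm_sub_tendsto_zero.mp hzs1)
        simpa using this
    have hn2 : Tendsto (fun n => (ws n).2) atTop (𝓝 p.2) := by
      rw [tendsto_iff_norm_sub_tendsto_zero]
      apply squeeze_zero' (Eventually.of_forall fun n => norm_nonneg _)
      · filter_upwards [hne_top] with n hn
        calc ‖(ws n).2 - p.2‖ ≤ ‖(ws n).2 - (zs n).2‖ + ‖(zs n).2 - p.2‖ := by
              have e : (ws n).2 - p.2 = ((ws n).2 - (zs n).2) + ((zs n).2 - p.2) := by abel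
              rw [e]; exact norm_add_le _ _
        _ ≤ Real.sqrt (2 * εn n) + ‖(zs n).2 - p.2‖ := by
              linarith [(hbnd n hn).2]
      · have := hsq.add (tendsto_iff_norm_sub_tendsto_zero.mp hzs2)
        simpa using this
    exact hn1.prodMk_nhds hn2
  · -- OpLiminf ⊆ Lset f
    rintro ⟨zs, hzsT, hzs⟩
    have hval : ∀ n, fs n (zs n) = ((pairing (zs n) : ℝ) : EReal) := fun n => hzsT n
    have hπlim : Tendsto (fun n => ((pairing (zs n) : ℝ) : EReal)) atTop
        (𝓝 ((pairing p : ℝ) : EReal)) :=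
      (continuous_coe_real_ereal.tendsto _).comp ((hpair_cont.tendsto p).comp hzs)
    have hle : f p ≤ ((pairing p : ℝ) : EReal) := by
      have h1 := (hepi p).2 zs hzs
      have h2 : Filter.liminf (fun n => fs n (zs n)) atTop = ((pairing p : ℝ) : EReal) := by
        have e : (fun n => fs n (zs n)) = fun n => ((pairing (zs n) : ℝ) : EReal) := funext hval
        rw [e]
        exact hπlim.liminf_eq
      rw [h2] at h1; exact h1
    have hge : ((pairing p : ℝ) : EReal) ≤ f p := by
      obtain ⟨ys, hys, hylim⟩ := (hepi p).1
      have hylow : ∀ n, ((pairing (ys n) : ℝ) : EReal) ≤ fs n (ys n) := fun n => hfs_rep n (ys n)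
      have hyπ : Tendsto (fun n => ((pairing (ys n) : ℝ) : EReal)) atTop
          (𝓝 ((pairing p : ℝ) : EReal)) :=
        (continuous_coe_real_ereal.tendsto _).comp ((hpair_cont.tendsto p).comp hys)
      exact le_of_tendsto_of_tendsto' hyπ hylim hylow
    exact le_antisymm hle hge
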